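/- Let G and H be groups generated by finite sets X and Y, respectively. If G and H are quasi-isometric, then their isoperimetric spectra are equivalent: f_{G,X} ∼ f_{H,Y}. In particular, the equivalence class of the isoperimetric spectrum of a finitely generated group does not depend on the choice of the finite generating set. -/

import Mathlib

open Function

namespace IsoSpecPaper

variable {ι : Type*} {G : Type*} [Group G]

/-- The (reduced) length of an element of a free group. -/
noncomputable def wnorm (w : FreeGroup ι) : ℕ :=
  @FreeGroup.norm ι (Classical.decEq ι) w

/-- `triv φ k` : the set of words of length at most `k` in the generators
(and their inverses) representing the identity of `G` under the marking `φ`. -/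
noncomputable def triv (φ : FreeGroup ι →* G) (k : ℕ) : Set (FreeGroup ι) :=
  {w | wnorm w ≤ k ∧ φ w = 1}

/-- `AreaLe R w l` : `w` is a product of `l` conjugates of elements of `R` or
their inverses in the free group. -/
def AreaLe (R : Set (FreeGroup ι)) (w : FreeGroup ι) (l : ℕ) : Prop :=
  ∃ L : List (FreeGroup ι × FreeGroup ι), L.length = l ∧
    (∀ p ∈ L, p.2 ∈ R ∨ p.2⁻¹ ∈ R) ∧
    w = (L.map fun p => p.1⁻¹ * p.2 * p.1).prod

/-- The area of `w` with respect to the set of relators `R`. -/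
noncomputable def area (R : Set (FreeGroup ι)) (w : FreeGroup ι) : ℕ :=
  sInf {l | AreaLe R w l}

/-- The isoperimetric spectrum of the marked group `(G, φ)`:
`isoSpec φ k m n = max { area_{S_m}(w) : w ∈ ⟪S_k⟫, ‖w‖ ≤ n }`. -/
noncomputable def isoSpec (φ : FreeGroup ι →* G) (k m n : ℕ) : ℕ :=
  sSup (area (triv φ m) '' {w | w ∈ Subgroup.normalClosure (triv φ k) ∧ wnorm w ≤ n})

/-- The real-valued isoperimetric spectrum. -/
noncomputable def isoSpecR (φ : FreeGroup ι →* G) : ℕ → ℕ → ℕ → ℝ :=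
  fun k m n => (isoSpec φ k m n : ℝ)

/-- The Dehn function of the presentation with relators `R`. -/
noncomputable def dehn (R : Set (FreeGroup ι)) (n : ℕ) : ℕ :=
  sSup (area R '' {w | w ∈ Subgroup.normalClosure R ∧ wnorm w ≤ n})

/-- The quasi-order `f ≼ g` on functions of triples `(k,m,n)` of positive integers
with `m ≥ k`. -/
def SpecLE (f g : ℕ → ℕ → ℕ → ℝ) : Prop :=
  ∃ C : ℕ, 0 < C ∧ ∀ k m n : ℕ, 0 < k → 0 < m → 0 < n → C * k ≤ m →
    f k (C * m) n ≤ C * g (C * k) m (C * n) + C * (n : ℝ) / m + C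

/-- Equivalence of isoperimetric functions: `f ∼ g`. -/
def SpecEquiv (f g : ℕ → ℕ → ℕ → ℝ) : Prop := SpecLE f g ∧ SpecLE g f

/-- The linear spectrum `(k,m,n) ↦ n/m`. -/
noncomputable def linSpec : ℕ → ℕ → ℕ → ℝ := fun _ m n => (n : ℝ) / m

/-- The word length of `g ∈ G` with respect to the marking `φ`. -/
noncomputable def wlen (φ : FreeGroup ι →* G) (g : G) : ℕ :=
  sInf {n | ∃ w : FreeGroup ι, wnorm w = n ∧ φ w = g}

/-- The word metric on `G` with respect to the marking `φ`. -/
noncomputable def wdist (φ : FreeGroup ι →* G) (g h : G) : ℕ := wlen φ (g⁻¹ * h)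

/-- Quasi-isometry of marked groups with respect to their word metrics. -/
noncomputable def QuasiIsometric {H : Type*} [Group H] {κ : Type*}
    (φ : FreeGroup ι →* G) (ψ : FreeGroup κ →* H) : Prop :=
  ∃ L : ℝ, 0 ≤ L ∧ ∃ (α : G → H) (β : H → G),
    (∀ x y : G, (wdist ψ (α x) (α y) : ℝ) ≤ L * wdist φ x y + L) ∧
    (∀ u v : H, (wdist φ (β u) (β v) : ℝ) ≤ L * wdist ψ u v + L) ∧
    (∀ t : H, (wdist ψ (α (β t)) t : ℝ) ≤ L) ∧
    (∀ s : G, (wdist φ (β (α s)) s : ℝ) ≤ L)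

/-- A (combinatorial) geodesic path of length `n` in the Cayley graph of `(G, φ)`:
consecutive vertices are at distance at most `1` and the endpoints are at
distance exactly `n`. -/
noncomputable def IsGeodesic (φ : FreeGroup ι →* G) {n : ℕ} (p : Fin (n + 1) → G) : Prop :=
  (∀ i : Fin n, wdist φ (p i.castSucc) (p i.succ) ≤ 1) ∧
  wdist φ (p 0) (p (Fin.last n)) = n

/-- Every vertex of the path `p` lies within distance `δ` of the set `A`. -/
noncomputable def ThinAt (φ : FreeGroup ι →* G) (δ : ℝ) {n : ℕ}
    (p : Fin (n + 1) → G) (A : Set G) : Prop :=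
  ∀ i, ∃ a ∈ A, (wdist φ (p i) a : ℝ) ≤ δ

/-- The Cayley graph of `(G, φ)` is `δ`-hyperbolic: every geodesic triangle is `δ`-thin. -/
noncomputable def HypConst (φ : FreeGroup ι →* G) (δ : ℝ) : Prop :=
  ∀ (n₁ n₂ n₃ : ℕ) (p : Fin (n₁ + 1) → G) (q : Fin (n₂ + 1) → G) (r : Fin (n₃ + 1) → G),
    IsGeodesic φ p → IsGeodesic φ q → IsGeodesic φ r →
    p (Fin.last n₁) = q 0 → q (Fin.last n₂) = r 0 → r (Fin.last n₃) = p 0 →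
    ThinAt φ δ p (Set.range q ∪ Set.range r) ∧
    ThinAt φ δ q (Set.range r ∪ Set.range p) ∧
    ThinAt φ δ r (Set.range p ∪ Set.range q)

/-- The marked group `(G, φ)` is hyperbolic. -/
noncomputable def IsHyperbolic (φ : FreeGroup ι →* G) : Prop :=
  ∃ δ : ℝ, 0 ≤ δ ∧ HypConst φ δ

/-- `G` (marked by `φ`) is a limit (direct limit) of hyperbolic groups. -/
noncomputable def LimitOfHyperbolic (φ : FreeGroup ι →* G) : Prop :=
  Surjective φ ∧ ∃ R : ℕ → Set (FreeGroup ι),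
    (∀ i j, i ≤ j → R i ⊆ R j) ∧
    φ.ker = Subgroup.normalClosure (⋃ i, R i) ∧
    ∀ i, IsHyperbolic (QuotientGroup.mk' (Subgroup.normalClosure (R i)))

/-- `G` (marked by `φ`) is well-approximated by hyperbolic groups. -/
noncomputable def WellApproximated (φ : FreeGroup ι →* G) : Prop :=
  Surjective φ ∧ ∃ R : ℕ → Set (FreeGroup ι),
    (∀ i j, i ≤ j → R i ⊆ R j) ∧
    φ.ker = Subgroup.normalClosure (⋃ i, R i) ∧
    (∀ i, IsHyperbolic (QuotientGroup.mk' (Subgroup.normalClosure (R i)))) ∧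
    ∃ C : ℕ, 0 < C ∧ ∀ i : ℕ, 0 < i →
      (∀ w : FreeGroup ι, wnorm w ≤ i → φ w = 1 →
        w ∈ Subgroup.normalClosure (R i)) ∧
      HypConst (QuotientGroup.mk' (Subgroup.normalClosure (R i))) ((C * i : ℕ) : ℝ)

/-! ### Auxiliary lemmas -/

section Aux

lemma wnorm_eq_norm [inst : DecidableEq ι] (w : FreeGroup ι) : wnorm w = FreeGroup.norm w := by
  unfold wnorm
  have : Classical.decEq ι = inst := Subsingleton.elim _ _
  rw [this]

lemma wnorm_def [DecidableEq ι] (w : FreeGroup ι) : wnorm w = w.toWord.length := by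
  rw [wnorm_eq_norm]; rfl

lemma wnorm_one : wnorm (1 : FreeGroup ι) = 0 := by
  classical rw [wnorm_eq_norm]; exact FreeGroup.norm_one

lemma wnorm_inv (w : FreeGroup ι) : wnorm w⁻¹ = wnorm w := by
  classical rw [wnorm_eq_norm, wnorm_eq_norm]; exact FreeGroup.norm_inv_eq

lemma wnorm_mul_le (u v : FreeGroup ι) : wnorm (u * v) ≤ wnorm u + wnorm v := by
  classical rw [wnorm_eq_norm, wnorm_eq_norm, wnorm_eq_norm]; exact FreeGroup.norm_mul_le u v

lemma wnorm_mk_le (l : List (ι × Bool)) : wnorm (FreeGroup.mk l) ≤ l.length := by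
  classical rw [wnorm_eq_norm]; exact FreeGroup.norm_mk_le

variable (φ : FreeGroup ι →* G)

lemma wlen_le {w : FreeGroup ι} {g : G} (h : φ w = g) : wlen φ g ≤ wnorm w :=
  Nat.sInf_le ⟨w, rfl, h⟩

lemma wlen_exists (hφ : Surjective φ) (g : G) :
    ∃ w : FreeGroup ι, φ w = g ∧ wnorm w = wlen φ g := by
  have hne : {n | ∃ w : FreeGroup ι, wnorm w = n ∧ φ w = g}.Nonempty := by
    obtain ⟨w, hw⟩ := hφ g
    exact ⟨wnorm w, w, rfl, hw⟩
  obtain ⟨w, h1, h2⟩ := Nat.sInf_mem hne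
  exact ⟨w, h2, h1⟩

lemma wlen_inv (g : G) : wlen φ g⁻¹ = wlen φ g := by
  unfold wlen
  congr 1
  ext n
  constructor
  · rintro ⟨w, h1, h2⟩
    exact ⟨w⁻¹, by rw [wnorm_inv, h1], by rw [map_inv, h2, inv_inv]⟩
  · rintro ⟨w, h1, h2⟩
    exact ⟨w⁻¹, by rw [wnorm_inv, h1], by rw [map_inv, h2]⟩

lemma wdist_comm (g h : G) : wdist φ g h = wdist φ h g := by
  unfold wdist
  rw [← wlen_inv, mul_inv_rev, inv_inv]

lemma wdist_mul_le_one (g : G) (l : List (ι × Bool)) (hl : l.length ≤ 1) :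
    wdist φ g (g * φ (FreeGroup.mk l)) ≤ 1 := by
  unfold wdist
  calc wlen φ (g⁻¹ * (g * φ (FreeGroup.mk l))) = wlen φ (φ (FreeGroup.mk l)) := by
        rw [inv_mul_cancel_left]
    _ ≤ wnorm (FreeGroup.mk l) := wlen_le φ rfl
    _ ≤ l.length := wnorm_mk_le l
    _ ≤ 1 := hl

/-- A symmetric choice of geodesic words: `c g h` is a word of length `wdist φ g h`
representing `g⁻¹ * h`, with `c h g = (c g h)⁻¹`. -/
lemma exists_symgeo (hφ : Surjective φ) :
    ∃ c : G → G → FreeGroup ι, (∀ g h, φ (c g h) = g⁻¹ * h) ∧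
      (∀ g h, wnorm (c g h) = wdist φ g h) ∧ (∀ g h, c h g = (c g h)⁻¹) := by
  classical
  choose ρ hρ1 hρ2 using wlen_exists φ hφ
  have hasym : ∀ x y : G, WellOrderingRel x y → ¬ WellOrderingRel y x := fun x y hxy hyx =>
    (IsWellFounded.wf (r := @WellOrderingRel G)).asymmetric x y hxy hyx
  refine ⟨fun g h => if g = h then 1 else if WellOrderingRel g h then ρ (g⁻¹ * h)
    else (ρ (h⁻¹ * g))⁻¹, ?_, ?_, ?_⟩
  · intro g h
    by_cases hgh : g = h
    · simp [hgh]
    · by_cases hr : WellOrderingRel g h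
      · simp [hgh, hr, hρ1]
      · simp [hgh, hr, hρ1]
  · intro g h
    unfold wdist
    dsimp only
    split_ifs with h1 h2
    · subst h1
      rw [wnorm_one]
      have h0 : wlen φ (g⁻¹ * g) ≤ 0 := by
        have := wlen_le φ (w := 1) (g := g⁻¹ * g) (by simp)
        simpa [wnorm_one] using this
      omega
    · exact hρ2 _
    · rw [wnorm_inv, hρ2, ← wlen_inv, mul_inv_rev, inv_inv]
  · intro g h
    by_cases hgh : g = h
    · subst hgh; simp
    · have hgh' : ¬ h = g := fun e => hgh e.symm
      rcases trichotomous_of (@WellOrderingRel G) g h with hr | hr | hr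
      · simp [hgh, hgh', hr, hasym g h hr]
      · exact absurd hr hgh
      · simp [hgh, hgh', hr, hasym h g hr]

end Aux

/-! ### The path-transfer map -/

section Transfer

set_option linter.unusedSectionVars false

variable {κ : Type*} {H : Type*} [Group H]

/-- Transfer a path (word) in the generators of `G` to a word in the generators of `H`,
by mapping vertices through `A` and connecting consecutive images by the chosen words `c`. -/
noncomputable def theta (φ : FreeGroup ι →* G) (A : G → H) (c : H → H → FreeGroup κ) :
    G → List (ι × Bool) → FreeGroup κ
  | _, [] => 1
  | g, z :: l => c (A g) (A (g * φ (FreeGroup.mk [z]))) *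
      theta φ A c (g * φ (FreeGroup.mk [z])) l

variable (φ : FreeGroup ι →* G) (ψ : FreeGroup κ →* H) (A : G → H) (c : H → H → FreeGroup κ)

@[simp] lemma theta_nil (g : G) : theta φ A c g [] = 1 := rfl

lemma theta_cons (g : G) (z : ι × Bool) (l : List (ι × Bool)) :
    theta φ A c g (z :: l) = c (A g) (A (g * φ (FreeGroup.mk [z]))) *
      theta φ A c (g * φ (FreeGroup.mk [z])) l := rfl

lemma theta_append (l₁ l₂ : List (ι × Bool)) (g : G) :
    theta φ A c g (l₁ ++ l₂) =
      theta φ A c g l₁ * theta φ A c (g * φ (FreeGroup.mk l₁)) l₂ := by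
  induction l₁ generalizing g with
  | nil =>
      simp [← FreeGroup.one_eq_mk]
  | cons z l ih =>
      have hmk : FreeGroup.mk (z :: l) = FreeGroup.mk [z] * FreeGroup.mk l := by
        rw [FreeGroup.mul_mk]; rfl
      simp only [List.cons_append, theta_cons, ih, hmk, map_mul, mul_assoc]

lemma map_theta (hc : ∀ g h : H, ψ (c g h) = g⁻¹ * h) (l : List (ι × Bool)) (g : G) :
    ψ (theta φ A c g l) = (A g)⁻¹ * A (g * φ (FreeGroup.mk l)) := by
  induction l generalizing g with
  | nil => simp [← FreeGroup.one_eq_mk]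
  | cons z l ih =>
      have hmk : FreeGroup.mk (z :: l) = FreeGroup.mk [z] * FreeGroup.mk l := by
        rw [FreeGroup.mul_mk]; rfl
      rw [theta_cons, map_mul, hc, ih, hmk, map_mul, ← mul_assoc, mul_assoc ((A g)⁻¹),
        mul_inv_cancel, mul_one, mul_assoc]

lemma theta_norm_le (K : ℕ)
    (hK : ∀ (g : G) (z : ι × Bool), wnorm (c (A g) (A (g * φ (FreeGroup.mk [z])))) ≤ K)
    (l : List (ι × Bool)) (g : G) :
    wnorm (theta φ A c g l) ≤ K * l.length := by
  induction l generalizing g with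
  | nil => simp [wnorm_one]
  | cons z l ih =>
      rw [theta_cons]
      calc wnorm (c (A g) (A (g * φ (FreeGroup.mk [z]))) *
            theta φ A c (g * φ (FreeGroup.mk [z])) l)
          ≤ wnorm (c (A g) (A (g * φ (FreeGroup.mk [z])))) +
            wnorm (theta φ A c (g * φ (FreeGroup.mk [z])) l) := wnorm_mul_le _ _
        _ ≤ K + K * l.length := Nat.add_le_add (hK g z) (ih _)
        _ = K * (z :: l).length := by rw [List.length_cons]; ring

lemma mk_pair_cancel (x : ι) (b : Bool) :
    FreeGroup.mk [(x, b), (x, !b)] = 1 := by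
  have h1 : FreeGroup.mk [(x, b), (x, !b)] = FreeGroup.mk [(x, b)] * FreeGroup.mk [(x, !b)] := by
    rw [FreeGroup.mul_mk]; rfl
  cases b
  · rw [h1]
    have : FreeGroup.mk [(x, false)] = (FreeGroup.of x)⁻¹ := by
      rw [FreeGroup.of, FreeGroup.inv_mk]; rfl
    rw [this]
    have : FreeGroup.mk [(x, !false)] = FreeGroup.of x := rfl
    rw [this, inv_mul_cancel]
  · rw [h1]
    have h2 : FreeGroup.mk [(x, true)] = FreeGroup.of x := rfl
    have h3 : FreeGroup.mk [(x, !true)] = (FreeGroup.of x)⁻¹ := by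
      rw [FreeGroup.of, FreeGroup.inv_mk]; rfl
    rw [h2, h3, mul_inv_cancel]

lemma theta_step (hsym : ∀ g h : H, c h g = (c g h)⁻¹)
    {l₁ l₂ : List (ι × Bool)} (h : FreeGroup.Red.Step l₁ l₂) (g : G) :
    theta φ A c g l₁ = theta φ A c g l₂ := by
  cases h with
  | @not L₁ L₂ x b =>
      rw [theta_append, theta_append]
      congr 1
      set g₁ := g * φ (FreeGroup.mk L₁) with hg₁
      have hcons : ((x, b) :: (x, !b) :: L₂ : List (ι × Bool)) =
          [(x, b)] ++ ([(x, !b)] ++ L₂) := rfl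
      rw [hcons, theta_append, theta_append]
      set g₂ := g₁ * φ (FreeGroup.mk [(x, b)]) with hg₂
      have hg3 : g₂ * φ (FreeGroup.mk [(x, !b)]) = g₁ := by
        rw [hg₂, mul_assoc, ← map_mul, FreeGroup.mul_mk]
        have : FreeGroup.mk ([(x, b)] ++ [(x, !b)]) = 1 := mk_pair_cancel x b
        rw [this, map_one, mul_one]
      rw [hg3]
      have h1 : theta φ A c g₁ [(x, b)] = c (A g₁) (A g₂) * 1 := rfl
      have h2 : theta φ A c g₂ [(x, !b)] = c (A g₂) (A (g₂ * φ (FreeGroup.mk [(x, !b)]))) * 1 :=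
        rfl
      rw [h1, h2, hg3, hsym (A g₂) (A g₁), mul_one, mul_one, ← mul_assoc, inv_mul_cancel,
        one_mul]

lemma theta_red (hsym : ∀ g h : H, c h g = (c g h)⁻¹)
    {l₁ l₂ : List (ι × Bool)} (h : FreeGroup.Red l₁ l₂) (g : G) :
    theta φ A c g l₁ = theta φ A c g l₂ := by
  induction h with
  | refl => rfl
  | tail _ hstep ih => rw [ih, theta_step φ A c hsym hstep g]

/-- The transfer map, on elements of the free group. -/
noncomputable def thetaF [DecidableEq ι] (φ : FreeGroup ι →* G) (A : G → H)
    (c : H → H → FreeGroup κ) (g : G) (w : FreeGroup ι) : FreeGroup κ :=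
  theta φ A c g w.toWord

variable [DecidableEq ι]

lemma thetaF_mk (hsym : ∀ g h : H, c h g = (c g h)⁻¹) (l : List (ι × Bool)) (g : G) :
    thetaF φ A c g (FreeGroup.mk l) = theta φ A c g l := by
  unfold thetaF
  rw [FreeGroup.toWord_mk]
  exact (theta_red φ A c hsym (FreeGroup.reduce.red) g).symm

@[simp] lemma thetaF_one (g : G) : thetaF φ A c g 1 = 1 := by
  unfold thetaF
  rw [FreeGroup.toWord_one]
  rfl

lemma thetaF_mul (hsym : ∀ g h : H, c h g = (c g h)⁻¹) (u v : FreeGroup ι) (g : G) :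
    thetaF φ A c g (u * v) = thetaF φ A c g u * thetaF φ A c (g * φ u) v := by
  have huv : u * v = FreeGroup.mk (u.toWord ++ v.toWord) := by
    rw [← FreeGroup.mul_mk, FreeGroup.mk_toWord, FreeGroup.mk_toWord]
  rw [huv, thetaF_mk φ A c hsym, theta_append]
  rw [FreeGroup.mk_toWord]
  rfl

lemma map_thetaF (hc : ∀ g h : H, ψ (c g h) = g⁻¹ * h) (u : FreeGroup ι) (g : G) :
    ψ (thetaF φ A c g u) = (A g)⁻¹ * A (g * φ u) := by
  unfold thetaF
  rw [map_theta φ ψ A c hc, FreeGroup.mk_toWord]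

lemma thetaF_inv (hsym : ∀ g h : H, c h g = (c g h)⁻¹) (u : FreeGroup ι) (g : G) :
    thetaF φ A c g u⁻¹ = (thetaF φ A c (g * φ u⁻¹) u)⁻¹ := by
  have h1 : (1 : FreeGroup κ) = thetaF φ A c g (u⁻¹ * u) := by
    rw [inv_mul_cancel, thetaF_one]
  rw [thetaF_mul φ A c hsym] at h1
  exact eq_inv_of_mul_eq_one_left h1.symm

lemma thetaF_norm_le (K : ℕ)
    (hK : ∀ (g : G) (z : ι × Bool), wnorm (c (A g) (A (g * φ (FreeGroup.mk [z])))) ≤ K)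
    (u : FreeGroup ι) (g : G) :
    wnorm (thetaF φ A c g u) ≤ K * wnorm u := by
  rw [wnorm_def u]
  exact theta_norm_le φ A c K hK u.toWord g

/-- Transfer of membership in a normal closure. -/
lemma thetaF_mem_normalClosure (hc : ∀ g h : H, ψ (c g h) = g⁻¹ * h)
    (hsym : ∀ g h : H, c h g = (c g h)⁻¹)
    {S : Set (FreeGroup ι)} (hS : ∀ s ∈ S, φ s = 1)
    {T : Set (FreeGroup κ)} (hT : ∀ s ∈ S, ∀ g : G, thetaF φ A c g s ∈ T)
    {w : FreeGroup ι} (hw : w ∈ Subgroup.normalClosure S) (g : G) :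
    thetaF φ A c g w ∈ Subgroup.normalClosure T := by
  revert g
  refine Subgroup.closure_induction
    (p := fun x _ => ∀ g : G, thetaF φ A c g x ∈ Subgroup.normalClosure T)
    ?_ ?_ ?_ ?_ hw
  · intro x hx g
    rw [Group.mem_conjugatesOfSet_iff] at hx
    obtain ⟨s, hs, hconj⟩ := hx
    obtain ⟨f, hf⟩ := isConj_iff.mp hconj
    have hφs : φ s = 1 := hS s hs
    have hx' : x = f * (s * f⁻¹) := by rw [← hf]; group
    have e1 : thetaF φ A c g x = thetaF φ A c g f * (thetaF φ A c (g * φ f) s *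
        thetaF φ A c (g * φ f) f⁻¹) := by
      rw [hx', thetaF_mul φ A c hsym, thetaF_mul φ A c hsym, hφs, mul_one]
    have e2 : thetaF φ A c (g * φ f) f⁻¹ = (thetaF φ A c g f)⁻¹ := by
      rw [thetaF_inv φ A c hsym, map_inv, mul_assoc, mul_inv_cancel, mul_one]
    rw [e1, e2, ← mul_assoc]
    have hmem : thetaF φ A c (g * φ f) s ∈ Subgroup.normalClosure T :=
      Subgroup.subset_normalClosure (hT s hs _)
    exact (Subgroup.normalClosure_normal).conj_mem _ hmem (thetaF φ A c g f)
  · intro g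
    rw [thetaF_one]
    exact one_mem _
  · intro x y _ _ hx hy g
    rw [thetaF_mul φ A c hsym]
    exact mul_mem (hx g) (hy (g * φ x))
  · intro x _ hx g
    rw [thetaF_inv φ A c hsym]
    exact inv_mem (hx _)

end Transfer

/-! ### Area lemmas -/

section Area

variable {R R' : Set (FreeGroup ι)} {u v w : FreeGroup ι} {l l' : ℕ}

lemma AreaLe.one' : AreaLe R (1 : FreeGroup ι) 0 :=
  ⟨[], rfl, by simp, by simp⟩

lemma AreaLe.single {r : FreeGroup ι} (h : r ∈ R ∨ r⁻¹ ∈ R) : AreaLe R r 1 :=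
  ⟨[(1, r)], rfl, by simpa using h, by simp⟩

lemma AreaLe.mul (hu : AreaLe R u l) (hv : AreaLe R v l') : AreaLe R (u * v) (l + l') := by
  obtain ⟨Lu, hLu, hRu, hpu⟩ := hu
  obtain ⟨Lv, hLv, hRv, hpv⟩ := hv
  refine ⟨Lu ++ Lv, by simp [hLu, hLv], ?_, ?_⟩
  · intro p hp
    rcases List.mem_append.mp hp with h | h
    · exact hRu p h
    · exact hRv p h
  · rw [List.map_append, List.prod_append, ← hpu, ← hpv]

lemma list_prod_conj (f : FreeGroup ι) (L : List (FreeGroup ι)) :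
    (L.map fun x => f * x * f⁻¹).prod = f * L.prod * f⁻¹ := by
  induction L with
  | nil => simp
  | cons x L ih => simp only [List.map_cons, List.prod_cons, ih]; group

lemma AreaLe.conj (f : FreeGroup ι) (hu : AreaLe R u l) : AreaLe R (f * u * f⁻¹) l := by
  obtain ⟨L, hL, hR, hp⟩ := hu
  refine ⟨L.map fun p => (p.1 * f⁻¹, p.2), by simp [hL], ?_, ?_⟩
  · intro p hp
    obtain ⟨q, hq, rfl⟩ := List.mem_map.mp hp
    exact hR q hq
  · have : ((L.map fun p => (p.1 * f⁻¹, p.2)).map fun p => p.1⁻¹ * p.2 * p.1) =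
        (L.map fun p => p.1⁻¹ * p.2 * p.1).map fun x => f * x * f⁻¹ := by
      rw [List.map_map, List.map_map]
      refine List.map_congr_left fun p _ => ?_
      simp only [Function.comp_apply, mul_inv_rev, inv_inv]
      group
    rw [this, list_prod_conj, ← hp]

lemma AreaLe.inv (hu : AreaLe R u l) : AreaLe R u⁻¹ l := by
  obtain ⟨L, hL, hR, hp⟩ := hu
  refine ⟨(L.map fun p => (p.1, p.2⁻¹)).reverse, by simp [hL], ?_, ?_⟩
  · intro p hp
    rw [List.mem_reverse] at hp
    obtain ⟨q, hq, rfl⟩ := List.mem_map.mp hp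
    rcases hR q hq with h | h
    · exact Or.inr (by simpa using h)
    · exact Or.inl h
  · rw [hp]
    clear hp hR hL
    induction L with
    | nil => simp
    | cons p L ih =>
        simp only [List.map_cons, List.prod_cons, List.reverse_cons, List.map_append,
          List.prod_append, mul_inv_rev, ih]
        simp [mul_assoc]

lemma AreaLe.mono_set (h : R ⊆ R') (hu : AreaLe R u l) : AreaLe R' u l := by
  obtain ⟨L, hL, hR, hp⟩ := hu
  exact ⟨L, hL, fun p hp => (hR p hp).imp (@h p.2) (@h p.2⁻¹), hp⟩

lemma AreaLe.pad (h1 : (1 : FreeGroup ι) ∈ R) (hu : AreaLe R u l) (hle : l ≤ l') :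
    AreaLe R u l' := by
  obtain ⟨L, hL, hR, hp⟩ := hu
  refine ⟨L ++ List.replicate (l' - l) ((1 : FreeGroup ι), (1 : FreeGroup ι)),
    by simp [hL]; omega, ?_, ?_⟩
  · intro p hp
    rcases List.mem_append.mp hp with h | h
    · exact hR p h
    · rw [List.eq_of_mem_replicate h]
      exact Or.inl h1
  · rw [List.map_append, List.prod_append, ← hp]
    have : ∀ q : ℕ, ((List.replicate q ((1 : FreeGroup ι), (1 : FreeGroup ι))).map
        fun p => p.1⁻¹ * p.2 * p.1).prod = 1 := by
      intro q
      induction q with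
      | zero => simp
      | succ q ih => simp [List.replicate_succ, ih]
    rw [this, mul_one]

lemma area_le_of_areaLe (h : AreaLe R w l) : area R w ≤ l := Nat.sInf_le h

lemma exists_areaLe_of_mem_normalClosure {S : Set (FreeGroup ι)}
    (hw : w ∈ Subgroup.normalClosure S) : ∃ l, AreaLe S w l := by
  refine Subgroup.closure_induction (p := fun x _ => ∃ l, AreaLe S x l) ?_ ?_ ?_ ?_ hw
  · intro x hx
    rw [Group.mem_conjugatesOfSet_iff] at hx
    obtain ⟨s, hs, hconj⟩ := hx
    obtain ⟨f, hf⟩ := isConj_iff.mp hconj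
    refine ⟨1, ?_⟩
    have : x = f * s * f⁻¹ := hf.symm
    rw [this]
    exact AreaLe.conj f (AreaLe.single (Or.inl hs))
  · exact ⟨0, AreaLe.one'⟩
  · rintro x y _ _ ⟨lx, hx⟩ ⟨ly, hy⟩
    exact ⟨lx + ly, hx.mul hy⟩
  · rintro x _ ⟨lx, hx⟩
    exact ⟨lx, hx.inv⟩

lemma areaLe_area {S : Set (FreeGroup ι)} (hw : w ∈ Subgroup.normalClosure S) :
    AreaLe S w (area S w) :=
  Nat.sInf_mem (exists_areaLe_of_mem_normalClosure hw)

end Area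

/-! ### Pushing area bounds through the transfer map -/

section Push

set_option linter.unusedSectionVars false

variable {κ : Type*} {H : Type*} [Group H] [DecidableEq ι]
variable (φ : FreeGroup ι →* G) (ψ : FreeGroup κ →* H) (A : G → H) (c : H → H → FreeGroup κ)

lemma areaLe_thetaF (hsym : ∀ g h : H, c h g = (c g h)⁻¹)
    {R : Set (FreeGroup ι)} (hR : ∀ r ∈ R, φ r = 1)
    {T : Set (FreeGroup κ)}
    (hT : ∀ r : FreeGroup ι, (r ∈ R ∨ r⁻¹ ∈ R) → ∀ g : G, thetaF φ A c g r ∈ T)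
    {w : FreeGroup ι} {l : ℕ} (h : AreaLe R w l) (g : G) :
    AreaLe T (thetaF φ A c g w) l := by
  obtain ⟨L, hL, hRL, hp⟩ := h
  subst hL
  rw [hp]
  clear hp
  induction L generalizing g with
  | nil => simpa using AreaLe.one' (R := T)
  | cons p L ih =>
      have hp2 : φ p.2 = 1 := by
        rcases hRL p List.mem_cons_self with h | h
        · exact hR _ h
        · have := hR _ h
          rw [map_inv, inv_eq_one] at this
          exact this
      have hfirst : φ (p.1⁻¹ * p.2 * p.1) = 1 := by
        rw [map_mul, map_mul, map_inv, hp2, mul_one, inv_mul_cancel]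
      simp only [List.map_cons, List.prod_cons]
      rw [thetaF_mul φ A c hsym, hfirst, mul_one]
      have h1 : AreaLe T (thetaF φ A c g (p.1⁻¹ * p.2 * p.1)) 1 := by
        set h0 := g * (φ p.1)⁻¹ with hh0
        have e0 : thetaF φ A c g p.1⁻¹ = (thetaF φ A c h0 p.1)⁻¹ := by
          rw [thetaF_inv φ A c hsym, map_inv]
        have e1 : thetaF φ A c g (p.1⁻¹ * p.2 * p.1) =
            (thetaF φ A c h0 p.1)⁻¹ * thetaF φ A c h0 p.2 * thetaF φ A c h0 p.1 := by
          rw [thetaF_mul φ A c hsym, thetaF_mul φ A c hsym, e0, map_mul, map_inv, hp2,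
            mul_one]
        rw [e1]
        refine ⟨[(thetaF φ A c h0 p.1, thetaF φ A c h0 p.2)], rfl, ?_, by simp [mul_assoc]⟩
        intro q hq
        simp only [List.mem_singleton] at hq
        subst hq
        exact Or.inl (hT p.2 (hRL p List.mem_cons_self) h0)
      have := h1.mul (ih g (fun q hq => hRL q (List.mem_cons_of_mem p hq)))
      simpa [Nat.add_comm] using this

end Push

/-! ### Facts about `triv` -/

section TrivFacts

variable (φ : FreeGroup ι →* G)

lemma one_mem_triv (k : ℕ) : (1 : FreeGroup ι) ∈ triv φ k :=
  ⟨by rw [wnorm_one]; exact Nat.zero_le k, map_one φ⟩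

lemma triv_mono {k k' : ℕ} (h : k ≤ k') : triv φ k ⊆ triv φ k' :=
  fun _ hw => ⟨le_trans hw.1 h, hw.2⟩

lemma map_eq_one_of_mem_normalClosure_triv {k : ℕ} {w : FreeGroup ι}
    (hw : w ∈ Subgroup.normalClosure (triv φ k)) : φ w = 1 := by
  have : Subgroup.normalClosure (triv φ k) ≤ φ.ker :=
    Subgroup.normalClosure_le_normal fun x hx => hx.2
  exact this hw

end TrivFacts

/-! ### The strip lemma -/

section Strip

set_option linter.unusedSectionVars false

variable {κ : Type*} {H : Type*} [Group H] [DecidableEq ι] [DecidableEq κ]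
variable (φ : FreeGroup ι →* G) (ψ : FreeGroup κ →* H)
variable (A : G → H) (B : H → G) (cH : H → H → FreeGroup κ) (cG : G → G → FreeGroup ι)

/-- The boundary word of a chunk of the strip between a path and its image
under the composed transfer. -/
noncomputable def stripWord (g : G) (l : List (ι × Bool)) : FreeGroup ι :=
  cG g (B (A g)) * thetaF ψ B cG (A g) (theta φ A cH g l) *
    (cG (g * φ (FreeGroup.mk l)) (B (A (g * φ (FreeGroup.mk l)))))⁻¹ * (FreeGroup.mk l)⁻¹

lemma stripWord_mem_triv
    (hcG1 : ∀ g h : G, φ (cG g h) = g⁻¹ * h) (hcH1 : ∀ g h : H, ψ (cH g h) = g⁻¹ * h)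
    (m C K1 K2 : ℕ)
    (hq : ∀ g : G, wnorm (cG g (B (A g))) ≤ K1)
    (hΞΘ : ∀ (g : G) (l : List (ι × Bool)),
      wnorm (thetaF ψ B cG (A g) (theta φ A cH g l)) ≤ K2 * l.length)
    (hbound : K1 + K2 * m + K1 + m ≤ C * m)
    {l : List (ι × Bool)} (hl : l.length ≤ m) (g : G) :
    stripWord φ ψ A B cH cG g l ∈ triv φ (C * m) := by
  set g2 := g * φ (FreeGroup.mk l) with hg2
  constructor
  · have b1 := hq g
    have b2 : wnorm (thetaF ψ B cG (A g) (theta φ A cH g l)) ≤ K2 * m :=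
      le_trans (hΞΘ g l) (Nat.mul_le_mul_left K2 hl)
    have b3 := hq g2
    have b4 : wnorm (FreeGroup.mk l) ≤ m := le_trans (wnorm_mk_le l) hl
    have t1 := wnorm_mul_le (cG g (B (A g)) * thetaF ψ B cG (A g) (theta φ A cH g l) *
      (cG g2 (B (A g2)))⁻¹) (FreeGroup.mk l)⁻¹
    have t2 := wnorm_mul_le (cG g (B (A g)) * thetaF ψ B cG (A g) (theta φ A cH g l))
      (cG g2 (B (A g2)))⁻¹
    have t3 := wnorm_mul_le (cG g (B (A g))) (thetaF ψ B cG (A g) (theta φ A cH g l))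
    rw [wnorm_inv] at t1 t2
    unfold stripWord
    rw [← hg2]
    omega
  · have e2 : ψ (theta φ A cH g l) = (A g)⁻¹ * A g2 := map_theta φ ψ A cH hcH1 l g
    have e3 : φ (thetaF ψ B cG (A g) (theta φ A cH g l)) = (B (A g))⁻¹ * B (A g2) := by
      rw [map_thetaF ψ φ B cG hcG1, e2, mul_inv_cancel_left]
    have e5 : φ (FreeGroup.mk l) = g⁻¹ * g2 := by rw [hg2]; group
    unfold stripWord
    rw [← hg2, map_mul, map_mul, map_mul, map_inv, map_inv, e3, e5, hcG1, hcG1]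
    group

lemma strip_main
    (hsymG : ∀ g h : G, cG h g = (cG g h)⁻¹)
    (hcG1 : ∀ g h : G, φ (cG g h) = g⁻¹ * h) (hcH1 : ∀ g h : H, ψ (cH g h) = g⁻¹ * h)
    (m C K1 K2 : ℕ) (hm : 0 < m)
    (hq : ∀ g : G, wnorm (cG g (B (A g))) ≤ K1)
    (hΞΘ : ∀ (g : G) (l : List (ι × Bool)),
      wnorm (thetaF ψ B cG (A g) (theta φ A cH g l)) ≤ K2 * l.length)
    (hbound : K1 + K2 * m + K1 + m ≤ C * m) :
    ∀ (l : List (ι × Bool)) (g : G),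
      AreaLe (triv φ (C * m)) (stripWord φ ψ A B cH cG g l) (l.length / m + 1) := by
  suffices Hs : ∀ n (l : List (ι × Bool)), l.length ≤ n → ∀ g : G,
      AreaLe (triv φ (C * m)) (stripWord φ ψ A B cH cG g l) (l.length / m + 1) by
    intro l g
    exact Hs l.length l le_rfl g
  intro n
  induction n with
  | zero =>
      intro l hl g
      have hlm : l.length ≤ m := le_trans hl (Nat.zero_le m)
      have := stripWord_mem_triv φ ψ A B cH cG hcG1 hcH1 m C K1 K2 hq hΞΘ hbound hlm g
      exact (AreaLe.single (Or.inl this)).pad (one_mem_triv φ _) (Nat.succ_le_succ (Nat.zero_le _))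
  | succ n ih =>
      intro l hl g
      by_cases hlm : l.length ≤ m
      · have := stripWord_mem_triv φ ψ A B cH cG hcG1 hcH1 m C K1 K2 hq hΞΘ hbound hlm g
        exact (AreaLe.single (Or.inl this)).pad (one_mem_triv φ _) (Nat.succ_le_succ (Nat.zero_le _))
      · push_neg at hlm
        set l₁ := l.take m with hl₁def
        set l₂ := l.drop m with hl₂def
        have h12 : l = l₁ ++ l₂ := (List.take_append_drop m l).symm
        have hl₁ : l₁.length = m := by
          rw [hl₁def, List.length_take]
          omega
        have hl₂n : l₂.length ≤ n := by
          rw [hl₂def, List.length_drop]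
          omega
        set g₁ := g * φ (FreeGroup.mk l₁) with hg₁
        set g₂ := g * φ (FreeGroup.mk l) with hg₂
        have hg₂' : g₂ = g₁ * φ (FreeGroup.mk l₂) := by
          rw [hg₂, hg₁, h12, ← FreeGroup.mul_mk, map_mul, mul_assoc]
        have hkey : stripWord φ ψ A B cH cG g l =
            stripWord φ ψ A B cH cG g l₁ *
            (FreeGroup.mk l₁ * stripWord φ ψ A B cH cG g₁ l₂ * (FreeGroup.mk l₁)⁻¹) := by
          unfold stripWord
          rw [← hg₁, ← hg₂']
          have eθ : theta φ A cH g l = theta φ A cH g l₁ * theta φ A cH g₁ l₂ := by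
            rw [h12, theta_append, hg₁]
          have eΞ : thetaF ψ B cG (A g) (theta φ A cH g l) =
              thetaF ψ B cG (A g) (theta φ A cH g l₁) *
              thetaF ψ B cG (A g₁) (theta φ A cH g₁ l₂) := by
            rw [eθ, thetaF_mul ψ B cG hsymG, map_theta φ ψ A cH hcH1, ← hg₁,
              mul_inv_cancel_left]
          have emk : FreeGroup.mk l = FreeGroup.mk l₁ * FreeGroup.mk l₂ := by
            rw [FreeGroup.mul_mk, ← h12]
          rw [eΞ, ← hg₂, emk]
          group
        rw [hkey]
        have h1 : AreaLe (triv φ (C * m)) (stripWord φ ψ A B cH cG g l₁) 1 := by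
          have := stripWord_mem_triv φ ψ A B cH cG hcG1 hcH1 m C K1 K2 hq hΞΘ hbound
            (le_of_eq hl₁) g
          exact AreaLe.single (Or.inl this)
        have h2 := (ih l₂ hl₂n g₁).conj (FreeGroup.mk l₁)
        have := h1.mul h2
        have hlen : l.length = l₂.length + m := by
          rw [h12, List.length_append, hl₁]
          omega
        have hdiv : l.length / m = l₂.length / m + 1 := by
          rw [hlen, Nat.add_div_right _ hm]
        have hcount : l.length / m + 1 = 1 + (l₂.length / m + 1) := by omega
        rw [hcount]
        exact this

end Strip

/-! ### Finiteness of the set of short words -/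

lemma finite_wnorm_le {ι : Type*} [DecidableEq ι] [Finite ι] (n : ℕ) :
    {w : FreeGroup ι | wnorm w ≤ n}.Finite := by
  have h : {w : FreeGroup ι | wnorm w ≤ n} =
      FreeGroup.toWord ⁻¹' {l : List (ι × Bool) | l.length ≤ n} := by
    ext w
    simp [wnorm_def]
  rw [h]
  exact Set.Finite.preimage FreeGroup.toWord_injective.injOn (List.finite_length_le _ n)

/-! ### The one-sided comparison -/

lemma specLE_of_QI {G H : Type} [Group G] [Group H] {a b : ℕ}
    (φ : FreeGroup (Fin a) →* G) (ψ : FreeGroup (Fin b) →* H)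
    (hφ : Surjective φ) (hψ : Surjective ψ)
    {L : ℝ} (hL : 0 ≤ L) (A : G → H) (B : H → G)
    (hA : ∀ x y : G, (wdist ψ (A x) (A y) : ℝ) ≤ L * wdist φ x y + L)
    (hB : ∀ u v : H, (wdist φ (B u) (B v) : ℝ) ≤ L * wdist ψ u v + L)
    (hBA : ∀ s : G, (wdist φ (B (A s)) s : ℝ) ≤ L) :
    SpecLE (isoSpecR φ) (isoSpecR ψ) := by
  classical
  obtain ⟨cG, hcG1, hcG2, hcG3⟩ := exists_symgeo φ hφ
  obtain ⟨cH, hcH1, hcH2, hcH3⟩ := exists_symgeo ψ hψ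
  set K : ℕ := ⌈L⌉₊ + 1 with hKdef
  have hLK : L ≤ (K : ℝ) := by
    have := Nat.le_ceil L
    push_cast [hKdef]
    linarith
  have hK1 : 1 ≤ K := by omega
  -- step bounds for the two transfer maps
  have hstepΘ : ∀ (g : G) (z : Fin a × Bool),
      wnorm (cH (A g) (A (g * φ (FreeGroup.mk [z])))) ≤ 2 * K := by
    intro g z
    rw [hcH2]
    have hd1 : wdist φ g (g * φ (FreeGroup.mk [z])) ≤ 1 :=
      wdist_mul_le_one φ g [z] (by simp)
    have hcast : (wdist ψ (A g) (A (g * φ (FreeGroup.mk [z]))) : ℝ) ≤ 2 * K := by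
      calc (wdist ψ (A g) (A (g * φ (FreeGroup.mk [z]))) : ℝ)
          ≤ L * wdist φ g (g * φ (FreeGroup.mk [z])) + L := hA _ _
        _ ≤ L * 1 + L := by
            have : (wdist φ g (g * φ (FreeGroup.mk [z])) : ℝ) ≤ 1 := by exact_mod_cast hd1
            nlinarith
        _ ≤ 2 * K := by linarith
    exact_mod_cast hcast
  have hstepΞ : ∀ (h : H) (z : Fin b × Bool),
      wnorm (cG (B h) (B (h * ψ (FreeGroup.mk [z])))) ≤ 2 * K := by
    intro h z
    rw [hcG2]
    have hd1 : wdist ψ h (h * ψ (FreeGroup.mk [z])) ≤ 1 :=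
      wdist_mul_le_one ψ h [z] (by simp)
    have hcast : (wdist φ (B h) (B (h * ψ (FreeGroup.mk [z]))) : ℝ) ≤ 2 * K := by
      calc (wdist φ (B h) (B (h * ψ (FreeGroup.mk [z]))) : ℝ)
          ≤ L * wdist ψ h (h * ψ (FreeGroup.mk [z])) + L := hB _ _
        _ ≤ L * 1 + L := by
            have : (wdist ψ h (h * ψ (FreeGroup.mk [z])) : ℝ) ≤ 1 := by exact_mod_cast hd1
            nlinarith
        _ ≤ 2 * K := by linarith
    exact_mod_cast hcast
  have hq : ∀ g : G, wnorm (cG g (B (A g))) ≤ K := by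
    intro g
    rw [hcG2, wdist_comm]
    have : (wdist φ (B (A g)) g : ℝ) ≤ K := le_trans (hBA g) hLK
    exact_mod_cast this
  have hΘn : ∀ (g : G) (u : FreeGroup (Fin a)),
      wnorm (thetaF φ A cH g u) ≤ 2 * K * wnorm u :=
    fun g u => thetaF_norm_le φ A cH (2 * K) hstepΘ u g
  have hΞn : ∀ (h : H) (v : FreeGroup (Fin b)),
      wnorm (thetaF ψ B cG h v) ≤ 2 * K * wnorm v :=
    fun h v => thetaF_norm_le ψ B cG (2 * K) hstepΞ v h
  have hΞΘ : ∀ (g : G) (l : List (Fin a × Bool)),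
      wnorm (thetaF ψ B cG (A g) (theta φ A cH g l)) ≤ 2 * K * (2 * K) * l.length := by
    intro g l
    calc wnorm (thetaF ψ B cG (A g) (theta φ A cH g l))
        ≤ 2 * K * wnorm (theta φ A cH g l) := hΞn _ _
      _ ≤ 2 * K * (2 * K * l.length) :=
          Nat.mul_le_mul_left _ (theta_norm_le φ A cH (2 * K) hstepΘ l g)
      _ = 2 * K * (2 * K) * l.length := by ring
  set C : ℕ := 4 * K * K + 2 * K + 1 with hCdef
  have hC1 : 1 ≤ C := by omega
  have h2KC : 2 * K ≤ C := by omega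
  refine ⟨C, by omega, ?_⟩
  intro k m n hk hm hn hkm
  have hbound : K + 2 * K * (2 * K) * m + K + m ≤ C * m := by
    have h1 : K * 1 ≤ K * m := Nat.mul_le_mul_left K hm
    calc K + 2 * K * (2 * K) * m + K + m = 2 * K * (2 * K) * m + m + (K * 1 + K * 1) := by ring
      _ ≤ 2 * K * (2 * K) * m + m + (K * m + K * m) := by omega
      _ = C * m := by rw [hCdef]; ring
  set N : ℕ := isoSpec ψ (C * k) m (C * n) with hNdef
  have hNat : isoSpec φ k (C * m) n ≤ N + (n / m + 1) := by
    rw [isoSpec]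
    apply csSup_le
    · refine ⟨area (triv φ (C * m)) 1, ⟨1, ⟨one_mem _, ?_⟩, rfl⟩⟩
      rw [wnorm_one]
      exact Nat.zero_le n
    · rintro x ⟨w, ⟨hw1, hw2⟩, rfl⟩
      have hφw : φ w = 1 := map_eq_one_of_mem_normalClosure_triv φ hw1
      set w' : FreeGroup (Fin b) := thetaF φ A cH 1 w with hw'def
      have hw'norm : wnorm w' ≤ C * n := by
        calc wnorm w' ≤ 2 * K * wnorm w := hΘn 1 w
          _ ≤ 2 * K * n := Nat.mul_le_mul_left _ hw2
          _ ≤ C * n := Nat.mul_le_mul_right n h2KC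
      have hw'mem : w' ∈ Subgroup.normalClosure (triv ψ (C * k)) := by
        refine thetaF_mem_normalClosure φ ψ A cH hcH1 hcH3 (fun s hs => hs.2) ?_ hw1 1
        intro s hs g
        constructor
        · calc wnorm (thetaF φ A cH g s) ≤ 2 * K * wnorm s := hΘn g s
            _ ≤ 2 * K * k := Nat.mul_le_mul_left _ hs.1
            _ ≤ C * k := Nat.mul_le_mul_right k h2KC
        · rw [map_thetaF φ ψ A cH hcH1, hs.2, mul_one, inv_mul_cancel]
      have hbdd : BddAbove (area (triv ψ m) ''
          {v | v ∈ Subgroup.normalClosure (triv ψ (C * k)) ∧ wnorm v ≤ C * n}) := by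
        refine Set.Finite.bddAbove (Set.Finite.image _ ?_)
        exact (finite_wnorm_le (C * n)).subset fun v hv => hv.2
      have harea' : area (triv ψ m) w' ≤ N :=
        le_csSup hbdd ⟨w', ⟨hw'mem, hw'norm⟩, rfl⟩
      have hw'mem_m : w' ∈ Subgroup.normalClosure (triv ψ m) :=
        Subgroup.normalClosure_mono (triv_mono ψ hkm) hw'mem
      have hAL' : AreaLe (triv ψ m) w' (area (triv ψ m) w') := areaLe_area hw'mem_m
      have hALpush : AreaLe (triv φ (C * m)) (thetaF ψ B cG (A 1) w')
          (area (triv ψ m) w') := by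
        refine areaLe_thetaF ψ B cG hcG3 (fun r hr => hr.2) ?_ hAL' (A 1)
        intro r hr h
        have hr1 : ψ r = 1 := by
          rcases hr with hr | hr
          · exact hr.2
          · have := hr.2
            rw [map_inv, inv_eq_one] at this
            exact this
        have hrn : wnorm r ≤ m := by
          rcases hr with hr | hr
          · exact hr.1
          · rw [← wnorm_inv]; exact hr.1
        constructor
        · calc wnorm (thetaF ψ B cG h r) ≤ 2 * K * wnorm r := hΞn h r
            _ ≤ 2 * K * m := Nat.mul_le_mul_left _ hrn
            _ ≤ C * m := Nat.mul_le_mul_right m h2KC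
        · rw [map_thetaF ψ φ B cG hcG1, hr1, mul_one, inv_mul_cancel]
      have hstrip := strip_main φ ψ A B cH cG hcG3 hcG1 hcH1 m C K (2 * K * (2 * K)) hm
        hq hΞΘ hbound w.toWord 1
      set q1 : FreeGroup (Fin a) := cG 1 (B (A 1)) with hq1def
      have hXw : stripWord φ ψ A B cH cG 1 w.toWord =
          q1 * thetaF ψ B cG (A 1) w' * q1⁻¹ * w⁻¹ := by
        unfold stripWord
        rw [FreeGroup.mk_toWord, hφw, mul_one]
        rfl
      rw [hXw] at hstrip
      have hwid : w = (q1 * thetaF ψ B cG (A 1) w' * q1⁻¹ * w⁻¹)⁻¹ *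
          (q1 * thetaF ψ B cG (A 1) w' * q1⁻¹) := by group
      have htot : AreaLe (triv φ (C * m)) w
          ((w.toWord.length / m + 1) + area (triv ψ m) w') := by
        have h' := hstrip.inv.mul (hALpush.conj q1)
        rwa [← hwid] at h'
      have hxle : area (triv φ (C * m)) w ≤ (w.toWord.length / m + 1) + area (triv ψ m) w' :=
        area_le_of_areaLe htot
      have hlw : w.toWord.length ≤ n := by
        rw [← wnorm_def]
        exact hw2
      have hdivle : w.toWord.length / m ≤ n / m := Nat.div_le_div_right hlw
      omega
  -- pass to the real numbers
  unfold isoSpecR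
  rw [← hNdef]
  have c1 : ((isoSpec φ k (C * m) n : ℕ) : ℝ) ≤ ((N + (n / m + 1) : ℕ) : ℝ) :=
    Nat.cast_le.mpr hNat
  push_cast at c1
  have hdivle : ((n / m : ℕ) : ℝ) ≤ (n : ℝ) / (m : ℝ) := Nat.cast_div_le
  have hC1R : (1 : ℝ) ≤ (C : ℝ) := by exact_mod_cast hC1
  have hN0 : (0 : ℝ) ≤ (N : ℝ) := Nat.cast_nonneg N
  have hdiv0 : (0 : ℝ) ≤ (n : ℝ) / (m : ℝ) := by positivity
  have hmul : (C : ℝ) * (n : ℝ) / (m : ℝ) = (C : ℝ) * ((n : ℝ) / (m : ℝ)) := by ring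
  rw [hmul]
  nlinarith [mul_le_mul_of_nonneg_right hC1R hN0, mul_le_mul_of_nonneg_right hC1R hdiv0]

/-- If the finitely generated marked groups `(G, φ)` and `(H, ψ)` are
quasi-isometric, then their isoperimetric spectra are equivalent. -/
theorem isoSpec_equiv_of_quasiIsometric {G H : Type} [Group G] [Group H] {a b : ℕ}
    (φ : FreeGroup (Fin a) →* G) (ψ : FreeGroup (Fin b) →* H)
    (hφ : Surjective φ) (hψ : Surjective ψ)
    (hQI : QuasiIsometric φ ψ) :
    SpecEquiv (isoSpecR φ) (isoSpecR ψ) := by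
  obtain ⟨L, hL, α, β, hα, hβ, hαβ, hβα⟩ := hQI
  exact ⟨specLE_of_QI φ ψ hφ hψ hL α β hα hβ hβα,
    specLE_of_QI ψ φ hψ hφ hL β α hβ hα hαβ⟩

end IsoSpecPaper
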